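/- Let q be an odd prime power, r ≥ 2 even, N | q^r - 1 with gcd((q^r-1)/(q-1), N) = 2, H ≤ F_{q^r}^* of order (q^r-1)/N, and a ∈ F_{q^r}^* a non-square. Then the set {a·y·z : y ∈ F_q^*, z ∈ H} equals the set of non-squares of F_{q^r}^*, and every non-square arises with the same multiplicity 2(q-1)/N. -/

import Mathlib

private lemma aux_div_dvd_div {a b c : ℕ} (hab : a ∣ b) (hbc : b ∣ c) (ha : 0 < a)
    (hb : 0 < b) : c / b ∣ c / a := by
  obtain ⟨s, rfl⟩ := hab
  obtain ⟨t, rfl⟩ := hbc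
  rw [Nat.mul_div_cancel_left _ hb, Nat.mul_assoc, Nat.mul_div_cancel_left _ ha]
  exact dvd_mul_left t s

/-- Lemma 4.4 (non-square case): for a non-square `a ∈ F_{q^r}^*`, the multiset
`{a y z : y ∈ F_q^*, z ∈ H}` consists exactly of the non-squares of `F_{q^r}^*`,
each appearing with multiplicity `2(q-1)/N`. -/
theorem nonsquare_coset_multiset (q r N : ℕ) (hq : IsPrimePow q) (hodd : Odd q)
    (hr : 2 ≤ r) (hre : Even r) (hN : 0 < N) (hNdvd : N ∣ q ^ r - 1)
    (hgcd : Nat.gcd ((q ^ r - 1) / (q - 1)) N = 2)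
    (F : Type*) [Field F] [Fintype F] (hF : Fintype.card F = q ^ r)
    (K : Subfield F) (hK : Nat.card K = q)
    (H : Subgroup Fˣ) (hH : Nat.card H = (q ^ r - 1) / N)
    (a : Fˣ) (ha : ¬ IsSquare a) :
    (∀ x : Fˣ,
      (∃ (y : Kˣ) (z : H), (a : F) * ((y : K) : F) * ((z : Fˣ) : F) = (x : F)) ↔
        ¬ IsSquare x) ∧
    ∀ x : Fˣ, ¬ IsSquare x →
      Nat.card {p : Kˣ × H // (a : F) * ((p.1 : K) : F) * ((p.2 : Fˣ) : F) = (x : F)} =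
        2 * (q - 1) / N := by
  classical
  have hq2 : 2 ≤ q := hq.two_le
  have hqr1 : 1 < q ^ r := Nat.one_lt_pow (by omega) hq2
  set m := q ^ r - 1 with hmdef
  have hm0 : 0 < m := by omega
  have hqrodd : Odd (q ^ r) := hodd.pow
  -- basic cardinalities
  have hcardKu : Nat.card Kˣ = q - 1 := by rw [Nat.card_units, hK]
  have hcardFu : Nat.card Fˣ = m := by
    rw [Nat.card_units, Nat.card_eq_fintype_card, hF]
  -- characteristic is not 2
  have hchar : ringChar F ≠ 2 := by
    intro h
    have h2 := FiniteField.even_card_of_char_two h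
    rw [hF] at h2
    obtain ⟨k, hk⟩ := hqrodd
    omega
  have hhalf : q ^ r / 2 = m / 2 := by
    obtain ⟨k, hk⟩ := hqrodd; omega
  have hsq : ∀ x : Fˣ, IsSquare x ↔ x ^ (m / 2) = 1 := by
    intro x
    rw [FiniteField.unit_isSquare_iff hchar, hF, hhalf]
  -- divisibility facts
  have hd : (q - 1) ∣ m := by
    simpa using Nat.sub_dvd_pow_sub_pow q 1 r
  have h2N : 2 ∣ N := hgcd ▸ Nat.gcd_dvd_right _ _
  have h2u : 2 ∣ m / (q - 1) := hgcd ▸ Nat.gcd_dvd_left _ _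
  have h2m : 2 ∣ m := h2N.trans hNdvd
  have hu : (q - 1) * (m / (q - 1)) = m := Nat.mul_div_cancel' hd
  obtain ⟨t, ht⟩ := h2u
  obtain ⟨n, hnn⟩ := h2N
  have hNu : N * (m / N) = m := Nat.mul_div_cancel' hNdvd
  have hmN0 : 0 < m / N := Nat.div_pos (Nat.le_of_dvd hm0 hNdvd) hN
  have hmeq : m = 2 * ((q - 1) * t) := by rw [← hu, ht]; ring
  have hmeqN : m = 2 * ((m / N) * n) :=
    calc m = N * (m / N) := hNu.symm
    _ = 2 * ((m / N) * n) := by rw [hnn]; ring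
  have hdm2 : (q - 1) ∣ m / 2 := ⟨t, by omega⟩
  have hm2n : m / 2 = (m / N) * n := by omega
  have hNm2 : (m / N) ∣ m / 2 := ⟨n, by omega⟩
  -- a subgroup of order d equals the d-th roots of unity
  have key : ∀ (A : Subgroup Fˣ) (d : ℕ), 0 < d → Nat.card A = d →
      A = rootsOfUnity d F := by
    intro A d hd0 hcard
    haveI : NeZero d := ⟨hd0.ne'⟩
    have hle : A ≤ rootsOfUnity d F := by
      intro x hx
      rw [mem_rootsOfUnity]
      have h1 : (⟨x, hx⟩ : A) ^ d = 1 := by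
        rw [← hcard]; exact pow_card_eq_one'
      simpa using congrArg (Subtype.val) h1
    have h2 : ((rootsOfUnity d F : Subgroup Fˣ) : Set Fˣ).ncard ≤ (A : Set Fˣ).ncard := by
      rw [← Nat.card_coe_set_eq, ← Nat.card_coe_set_eq]
      simp only [SetLike.coe_sort_coe]
      rw [hcard]
      exact card_rootsOfUnity (k := d) F
    exact (SetLike.coe_injective
      (Set.eq_of_subset_of_ncard_le hle h2 (Set.toFinite _)))
  -- the embedding of Kˣ into Fˣ
  let e : Kˣ →* Fˣ := Units.map (K.subtype : K →+* F).toMonoidHom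
  have he : Function.Injective e := Units.map_injective K.subtype.injective
  -- the product homomorphism
  let ψ : Kˣ × H →* Fˣ :=
    (e.comp (MonoidHom.fst Kˣ H)) * ((H.subtype).comp (MonoidHom.snd Kˣ H))
  have hψ : ∀ p : Kˣ × H, ψ p = e p.1 * (p.2 : Fˣ) := fun p => rfl
  set P := ψ.range with hPdef
  -- P contains the image of Kˣ and H
  have hAP : ∀ y : Kˣ, e y ∈ P := fun y => ⟨(y, 1), by simp [hψ]⟩
  have hHP : H ≤ P := fun z hz => ⟨(1, ⟨z, hz⟩), by simp [hψ]⟩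
  -- pow facts
  have hey : ∀ y : Kˣ, (e y) ^ (q - 1) = 1 := by
    intro y
    have h1 : y ^ (q - 1) = 1 := by rw [← hcardKu]; exact pow_card_eq_one'
    rw [← map_pow, h1, map_one]
  have hz1 : ∀ z : H, ((z : Fˣ)) ^ (m / N) = 1 := by
    intro z
    have h1 : z ^ (m / N) = 1 := by rw [← hH]; exact pow_card_eq_one'
    simpa using congrArg (Subtype.val) h1
  have hPle : P ≤ rootsOfUnity (m / 2) F := by
    rintro x ⟨p, rfl⟩
    rw [mem_rootsOfUnity, hψ, mul_pow]
    have h1 : e p.1 ^ (m / 2) = 1 := by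
      obtain ⟨t', ht'⟩ := hdm2
      rw [ht', pow_mul, hey, one_pow]
    have h2 : ((p.2 : Fˣ)) ^ (m / 2) = 1 := by
      obtain ⟨n', hn'⟩ := hNm2
      rw [hn', pow_mul, hz1, one_pow]
    rw [h1, h2, one_mul]
  -- the order of P
  have hm20 : 0 < m / 2 := by omega
  haveI : NeZero (m / 2) := ⟨hm20.ne'⟩
  have hPcard : Nat.card P = m / 2 := by
    have hp_dvd : Nat.card P ∣ m := hcardFu ▸ Subgroup.card_subgroup_dvd_card P
    have hP0 : 0 < Nat.card P := Nat.card_pos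
    have hd_dvd : (q - 1) ∣ Nat.card P := by
      have : Nat.card e.range ∣ Nat.card P :=
        Subgroup.card_dvd_of_le (fun x ⟨y, hy⟩ => hy ▸ hAP y)
      rwa [← Nat.card_congr (MonoidHom.ofInjective he).toEquiv, hcardKu] at this
    have hN_dvd : (m / N) ∣ Nat.card P := hH ▸ Subgroup.card_dvd_of_le hHP
    have hPle2 : Nat.card P ≤ m / 2 := by
      calc Nat.card P ≤ Nat.card (rootsOfUnity (m / 2) F) :=
            Subgroup.card_le_of_le hPle
        _ ≤ m / 2 := by exact card_rootsOfUnity (k := m / 2) F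
    have h1 : m / Nat.card P ∣ m / (q - 1) := aux_div_dvd_div hd_dvd hp_dvd (by omega) hP0
    have h2 : m / Nat.card P ∣ N := by
      have := aux_div_dvd_div hN_dvd hp_dvd hmN0 hP0
      rwa [Nat.div_div_self hNdvd (by omega)] at this
    have h3 : m / Nat.card P ∣ 2 := hgcd ▸ Nat.dvd_gcd h1 h2
    have hPm : Nat.card P * (m / Nat.card P) = m := Nat.mul_div_cancel' hp_dvd
    rcases (Nat.dvd_prime Nat.prime_two).mp h3 with h5 | h5
    · rw [h5, mul_one] at hPm; omega
    · rw [h5] at hPm; omega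
  have hPeq : P = rootsOfUnity (m / 2) F := key P (m / 2) hm20 hPcard
  -- translate the condition
  have hcoe : ∀ y : Kˣ, ((e y : Fˣ) : F) = ((y : K) : F) := fun y => rfl
  have hcond : ∀ (x : Fˣ) (p : Kˣ × H),
      ((a : F) * ((p.1 : K) : F) * ((p.2 : Fˣ) : F) = (x : F)) ↔ ψ p = a⁻¹ * x := by
    intro x p
    have h1 : ((a * ψ p : Fˣ) : F) = (a : F) * ((p.1 : K) : F) * ((p.2 : Fˣ) : F) := by
      rw [hψ p, Units.val_mul, Units.val_mul, hcoe, mul_assoc]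
    constructor
    · intro h
      have h2 : a * ψ p = x := Units.ext (by rw [h1]; exact h)
      rw [← h2]; group
    · intro h
      have h2 : a * ψ p = x := by rw [h]; group
      rw [← h1, h2]
  -- square characterization of the shifted element
  have hx_iff : ∀ x : Fˣ, (a⁻¹ * x ∈ P ↔ ¬ IsSquare x) := by
    intro x
    rw [hPeq, mem_rootsOfUnity]
    have hval : ∀ w : Fˣ, ¬ IsSquare w → ((w ^ (m / 2) : Fˣ) : F) = -1 := by
      intro w hw
      have hql : w ^ (m / 2) * w ^ (m / 2) = 1 := by
        rw [← pow_add, show m / 2 + m / 2 = m from by omega, ← hcardFu]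
        exact pow_card_eq_one'
      have h1 : ((w ^ (m / 2) : Fˣ) : F) * ((w ^ (m / 2) : Fˣ) : F) = 1 := by
        rw [← Units.val_mul, hql, Units.val_one]
      rcases mul_self_eq_one_iff.mp h1 with h | h
      · exact absurd (by rw [hsq w]; exact Units.ext h) hw
      · exact h
    constructor
    · intro hpow hxsq
      apply ha
      have h1 : a = x * (a⁻¹ * x)⁻¹ := by group
      rw [h1]
      have h2 : IsSquare (a⁻¹ * x) := by rw [hsq]; exact hpow
      exact hxsq.mul h2.inv
    · intro hxns
      have h0 : (a⁻¹ * x) ^ (m / 2) = (a ^ (m / 2))⁻¹ * x ^ (m / 2) := by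
        rw [mul_pow, inv_pow]
      rw [h0]
      apply Units.ext
      rw [Units.val_mul, Units.val_inv_eq_inv_val, hval a ha, hval x hxns, Units.val_one]
      norm_num
  constructor
  · intro x
    constructor
    · rintro ⟨y, z, hyz⟩
      rw [hcond x (y, z)] at hyz
      exact (hx_iff x).mp ⟨(y, z), hyz⟩
    · intro hxns
      obtain ⟨p, hp⟩ := (hx_iff x).mpr hxns
      exact ⟨p.1, p.2, (hcond x p).mpr hp⟩
  · intro x hxns
    obtain ⟨p₀, hp₀⟩ := (hx_iff x).mpr hxns
    -- the fiber is in bijection with the kernel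
    have hfib : Nat.card {p : Kˣ × H //
        (a : F) * ((p.1 : K) : F) * ((p.2 : Fˣ) : F) = (x : F)} = Nat.card ψ.ker := by
      have e1 : {p : Kˣ × H // (a : F) * ((p.1 : K) : F) * ((p.2 : Fˣ) : F) = (x : F)} ≃
          {p : Kˣ × H // ψ p = a⁻¹ * x} :=
        Equiv.subtypeEquivRight (fun p => hcond x p)
      have e2 : {p : Kˣ × H // ψ p = a⁻¹ * x} ≃ (ψ ⁻¹' {ψ p₀} : Set (Kˣ × H)) :=
        Equiv.subtypeEquivRight (fun p => by
          simp only [Set.mem_preimage, Set.mem_singleton_iff, hp₀])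
      rw [Nat.card_congr (e1.trans (e2.trans (ψ.fiberEquivKer p₀)))]
    rw [hfib]
    -- compute the kernel cardinality
    have hcards : Nat.card (Kˣ × H) = Nat.card P * Nat.card ψ.ker := by
      rw [Subgroup.card_eq_card_quotient_mul_card_subgroup ψ.ker]
      congr 1
      exact Nat.card_congr (QuotientGroup.quotientKerEquivRange ψ).toEquiv
    rw [Nat.card_prod, hcardKu, hH, hPcard] at hcards
    have hn0 : 0 < n := by omega
    have hknv : (q - 1) * (m / N) = (m / N) * n * Nat.card ψ.ker := by
      rw [← hm2n]; exact hcards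
    have hk : q - 1 = n * Nat.card ψ.ker := by
      have := hknv
      rw [mul_comm (q - 1) (m / N), mul_assoc] at this
      exact Nat.eq_of_mul_eq_mul_left hmN0 this
    have : 2 * (q - 1) / N = Nat.card ψ.ker := by
      rw [hnn, hk]
      rw [show 2 * (n * Nat.card ψ.ker) / (2 * n) = Nat.card ψ.ker from by
        rw [Nat.mul_div_mul_left _ _ (by omega), Nat.mul_div_cancel_left _ hn0]]
    omega
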